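/- Fix a finite nonempty alphabet Σ equipped with a linear order, and let Ξ := Σ ⊕ Σ'' ⊕ Sym with φ : FL_Σ → Ξ* the canonical encoding. Define the stable failures relation fail_Σ ⊆ FL_Σ × (Σ* × (Finset Σ ∪ {•})), relating the observation ⟨A₀,a₁,…,aₙ,Aₙ⟩ to the pair (a₁…aₙ, X) for every X ⊆ Σ \ Aₙ when Aₙ ≠ •, and to the pair (a₁…aₙ, •) when Aₙ = •. Let Θ := Σ ⊕ Σ' ⊕ Sym, where Σ' is a disjoint copy {a' : a ∈ Σ} of Σ, and define the output encoding ψ by: ψ(s, •) = s, and ψ(s, X) = s followed by the symbol ⟨, the primed copies of the elements of X in increasing order, and the symbol ⟩. Then: (a) there exists a nondeterministic finite automaton with finitely many states over the alphabet Ξ ⊕ Θ recognising the relation {(φ(x), ψ(y)) : (x, y) ∈ fail_Σ}; and (b) ψ is order-reflecting, i.e. whenever ψ(y₁) is a prefix of ψ(y₂) then y₁ ≼ y₂, where ≼ is the relation induced by fail_Σ from the extension order on FL_Σ. -/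

import Mathlib

/-- A finite linear observation over alphabet `α`: an initial annotation `A₀`
(`none` = `•`, `some A` = a stable acceptance set) together with a list of pairs
`(aᵢ, Aᵢ)` of an event and the following annotation. -/
abbrev FLObs (α : Type) := Option (Finset α) × List (α × Option (Finset α))

/-- Extension on annotations: either they are equal or the first is `•`. -/
def optExt {α : Type} (A B : Option (Finset α)) : Prop := A = B ∨ A = none

/-- The extension order on finite linear observations. -/
def extLE {α : Type} (u v : FLObs α) : Prop :=
  optExt u.1 v.1 ∧ u.2.length ≤ v.2.length ∧
    ∀ (i : ℕ) (hi : i < u.2.length) (hj : i < v.2.length),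
      (u.2.get ⟨i, hi⟩).1 = (v.2.get ⟨i, hj⟩).1 ∧
        optExt (u.2.get ⟨i, hi⟩).2 (v.2.get ⟨i, hj⟩).2

/-- The four symbols `⟨`, `⟩`, `,`, `•` used by the canonical encoding. -/
inductive MSym : Type
  | lang | rang | comma | bullet
deriving DecidableEq

instance : Fintype MSym where
  elems := {MSym.lang, MSym.rang, MSym.comma, MSym.bullet}
  complete := by intro x; cases x <;> simp

/-- The alphabet `Ξ = Σ ⊕ Σ'' ⊕ MSym` of the canonical encoding: `Sum.inl a` is the
event `a`, `Sum.inr (Sum.inl a)` is the double-primed copy `a''`, and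
`Sum.inr (Sum.inr s)` is a symbol. -/
abbrev Xi (α : Type) := α ⊕ α ⊕ MSym

/-- Encoding of an annotation: `•` is the symbol `•`, a set is the list of the
double-primed copies of its elements in increasing order. -/
def encAnnXi {α : Type} [LinearOrder α] : Option (Finset α) → List (Xi α)
  | none => [Sum.inr (Sum.inr MSym.bullet)]
  | some A => (A.sort (· ≤ ·)).map (fun a => Sum.inr (Sum.inl a))

/-- The canonical encoding `φ` of finite linear observations: the observation
`⟨A₀, a₁, A₁, …, aₙ, Aₙ⟩` is written as the string `⟨ A₀ , a₁ , A₁ , … , aₙ , Aₙ ⟩`. -/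
def phi {α : Type} [LinearOrder α] (u : FLObs α) : List (Xi α) :=
  [Sum.inr (Sum.inr MSym.lang)] ++ encAnnXi u.1 ++
    (u.2.map (fun p => [Sum.inr (Sum.inr MSym.comma), Sum.inl p.1,
      Sum.inr (Sum.inr MSym.comma)] ++ encAnnXi p.2)).flatten ++
    [Sum.inr (Sum.inr MSym.rang)]

/-- An NFA over `α ⊕ β` recognises a relation `R ⊆ α* × β*` if `R s t` holds exactly
when the NFA accepts some interleaving of `s` (as left letters) and `t` (as right
letters). -/
def Recognises {α β Q : Type} (A : NFA (α ⊕ β) Q) (R : List α → List β → Prop) : Prop :=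
  ∀ (s : List α) (t : List β),
    R s t ↔ ∃ w ∈ A.accepts, w.filterMap Sum.getLeft? = s ∧ w.filterMap Sum.getRight? = t

/-- The relation on `O` induced by a relation `M : S → O → Prop` from a preorder
`le` on `S`. -/
def inducedRel {S O : Type} (le : S → S → Prop) (M : S → O → Prop) (y₁ y₂ : O) : Prop :=
  ∀ b, M b y₂ → ∃ a, M a y₁ ∧ le a b

/-- The final annotation `Aₙ` of an observation. -/
def lastAnn {α : Type} (u : FLObs α) : Option (Finset α) :=
  match u.2.getLast? with
  | none => u.1
  | some p => p.2


/-- Compatibility of a refusal annotation `X` with an acceptance annotation `A`: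
if `A = •` then `X = •`; if `A` is an acceptance set then `X` is a refusal set
disjoint from `A` (i.e. `X ⊆ Σ \ A`). -/
def compat {α : Type} (A X : Option (Finset α)) : Prop :=
  match A, X with
  | none, none => True
  | some A, some Y => ∀ a ∈ Y, a ∉ A
  | _, _ => False

/-- The output alphabet `Θ = Σ ⊕ Σ' ⊕ Sym`: `Sum.inl a` is the event `a`,
`Sum.inr (Sum.inl a)` is the primed copy `a'`, and `Sum.inr (Sum.inr s)` a symbol. -/
abbrev Theta (α : Type) := α ⊕ α ⊕ MSym

/-- Encoding of an optional refusal set: `•` contributes the empty word and a set `X`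
contributes `⟨` followed by the primed copies of its elements in increasing order
followed by `⟩`. -/
def encRef {α : Type} [LinearOrder α] : Option (Finset α) → List (Theta α)
  | none => []
  | some X => [Sum.inr (Sum.inr MSym.lang)] ++
      (X.sort (· ≤ ·)).map (fun a => Sum.inr (Sum.inl a)) ++ [Sum.inr (Sum.inr MSym.rang)]

/-- The stable failures relation: it relates `⟨A₀,a₁,…,aₙ,Aₙ⟩` to the pairs
`(a₁…aₙ, X)` for every refusal `X ⊆ Σ \ Aₙ` if `Aₙ ≠ •`, and to `(a₁…aₙ, •)`
if `Aₙ = •`. -/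
def failRel {α : Type} (u : FLObs α) (y : List α × Option (Finset α)) : Prop :=
  y.1 = u.2.map Prod.fst ∧ compat (lastAnn u) y.2

/-- The output encoding for failures: `ψ (s, •) = s` and `ψ (s, X) = s ⟨ X' ⟩` with the
elements of `X` primed, in increasing order. -/
def psiF {α : Type} [LinearOrder α] (y : List α × Option (Finset α)) : List (Theta α) :=
  y.1.map Sum.inl ++ encRef y.2


set_option linter.unusedSectionVars false
set_option linter.unnecessarySimpa false
set_option linter.unusedVariables false
set_option maxHeartbeats 1000000

namespace Stmt8


variable {β : Type} [DecidableEq β]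

def sfxL (D T : List (List β)) : List (List β) := [] :: (D ++ T).flatMap List.tails

lemma nil_mem_sfxL (D T : List (List β)) : ([] : List β) ∈ sfxL D T := List.mem_cons_self

lemma tail_mem_sfxL {D T : List (List β)} {x : β} {u : List β}
    (h : x :: u ∈ sfxL D T) : u ∈ sfxL D T := by
  rcases List.mem_cons.1 h with h | h
  · cases h
  · refine List.mem_cons.2 (Or.inr ?_)
    rcases List.mem_flatMap.1 h with ⟨w, hw, hu⟩
    exact List.mem_flatMap.2 ⟨w, hw, (List.mem_tails _ _).2
      ((List.suffix_cons x u).trans ((List.mem_tails _ _).1 hu))⟩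

lemma word_mem_sfxL {D T : List (List β)} {d : List β} (h : d ∈ D ++ T) : d ∈ sfxL D T :=
  List.mem_cons.2 (Or.inr (List.mem_flatMap.2 ⟨d, h, (List.mem_tails _ _).2 List.suffix_rfl⟩))

abbrev St (D T : List (List β)) : Type := Option ({u : List β // u ∈ sfxL D T} × Bool)

instance (D T : List (List β)) : Fintype (St D T) := by unfold St; infer_instance

variable (c : β) (D T : List (List β))

def mstep : St D T → β → Set (St D T)
  | none, b => if b = c then {some (⟨[], nil_mem_sfxL D T⟩, true)} else ∅
  | some (⟨[], _⟩, true), b =>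
      {q | ∃ (v : List β) (h : v ∈ sfxL D T) (ph' : Bool), q = some (⟨v, h⟩, ph') ∧
        (if ph' then b :: v ∈ D else b :: v ∈ T)}
  | some (⟨[], _⟩, false), _ => ∅
  | some (⟨x :: v, h⟩, ph), b =>
      if b = x then {some (⟨v, tail_mem_sfxL h⟩, ph)} else ∅

def M : NFA β (St D T) := ⟨mstep c D T, {none}, {some (⟨[], nil_mem_sfxL D T⟩, false)}⟩

lemma evalFrom_empty {σ : Type*} (A : NFA β σ) (w : List β) : A.evalFrom ∅ w = ∅ := by
  induction w with
  | nil => rfl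
  | cons b w ih => simpa [NFA.evalFrom] using ih

lemma mem_evalFrom_iff {σ : Type*} (A : NFA β σ) (q : σ) (w : List β) :
    ∀ S : Set σ, q ∈ A.evalFrom S w ↔ ∃ p ∈ S, q ∈ A.evalFrom {p} w := by
  induction w with
  | nil => intro S; simp
  | cons b w ih =>
      intro S
      have h1 : A.evalFrom S (b :: w) = A.evalFrom (A.stepSet S b) w := rfl
      rw [h1, ih]
      constructor
      · rintro ⟨r, hr, hq⟩
        rcases A.mem_stepSet.1 hr with ⟨p, hp, hr'⟩
        refine ⟨p, hp, ?_⟩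
        have h2 : A.evalFrom {p} (b :: w) = A.evalFrom (A.stepSet {p} b) w := rfl
        rw [h2, ih]
        refine ⟨r, ?_, hq⟩
        simpa [NFA.stepSet] using hr'
      · rintro ⟨p, hp, hq⟩
        have h2 : A.evalFrom {p} (b :: w) = A.evalFrom (A.stepSet {p} b) w := rfl
        rw [h2, ih] at hq
        rcases hq with ⟨r, hr, hq⟩
        refine ⟨r, ?_, hq⟩
        exact A.mem_stepSet.2 ⟨p, hp, by simpa [NFA.stepSet] using hr⟩

lemma evalFrom_cons_single {σ : Type*} (A : NFA β σ) (q : σ) (b : β) (w : List β) :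
    A.evalFrom {q} (b :: w) = A.evalFrom (A.step q b) w := by
  have : A.stepSet {q} b = A.step q b := by simp [NFA.stepSet]
  show A.evalFrom (A.stepSet {q} b) w = _
  rw [this]

def Acc (q : St D T) (w : List β) : Prop :=
  (some (⟨[], nil_mem_sfxL D T⟩, false) : St D T) ∈ (M c D T).evalFrom {q} w

lemma acc_false : ∀ (w u : List β) (h : u ∈ sfxL D T),
    Acc c D T (some (⟨u, h⟩, false)) w ↔ w = u := by
  intro w
  induction w with
  | nil =>
      intro u h
      simp [Acc, Subtype.ext_iff, eq_comm]
  | cons b w ih =>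
      intro u h
      cases u with
      | nil =>
          have hst : (M c D T).step (some (⟨[], h⟩, false)) b = ∅ := rfl
          unfold Acc
          rw [evalFrom_cons_single, hst, evalFrom_empty]
          simp
      | cons x v =>
          by_cases hbx : b = x
          · subst hbx
            have hst : (M c D T).step (some (⟨b :: v, h⟩, false)) b
                = {some (⟨v, tail_mem_sfxL h⟩, false)} := by
              simp [M, mstep]
            unfold Acc
            rw [evalFrom_cons_single, hst]
            have := ih v (tail_mem_sfxL h)
            unfold Acc at this
            rw [this]
            simp
          · have hst : (M c D T).step (some (⟨x :: v, h⟩, false)) b = ∅ := by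
              simp [M, mstep, hbx]
            unfold Acc
            rw [evalFrom_cons_single, hst, evalFrom_empty]
            simp [hbx]

lemma acc_true (hD : ∀ d ∈ D, d ≠ []) (hT : ∀ t ∈ T, t ≠ []) :
    ∀ (w u : List β) (h : u ∈ sfxL D T),
    Acc c D T (some (⟨u, h⟩, true)) w ↔
      ∃ (ds : List (List β)) (t : List β),
        (∀ d ∈ ds, d ∈ D) ∧ t ∈ T ∧ w = u ++ ds.flatten ++ t := by
  intro w
  induction w with
  | nil =>
      intro u h
      constructor
      · intro hq
        simp [Acc, Prod.ext_iff] at hq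
      · rintro ⟨ds, t, hds, ht, heq⟩
        exfalso
        rcases List.append_eq_nil_iff.1 heq.symm with ⟨-, h2⟩
        exact hT t ht h2
  | cons b w ih =>
      intro u h
      cases u with
      | cons x v =>
          by_cases hbx : b = x
          · subst hbx
            have hst : (M c D T).step (some (⟨b :: v, h⟩, true)) b
                = {some (⟨v, tail_mem_sfxL h⟩, true)} := by
              simp [M, mstep]
            unfold Acc
            rw [evalFrom_cons_single, hst]
            have := ih v (tail_mem_sfxL h)
            unfold Acc at this
            rw [this]
            constructor
            · rintro ⟨ds, t, hds, ht, rfl⟩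
              exact ⟨ds, t, hds, ht, by simp⟩
            · rintro ⟨ds, t, hds, ht, heq⟩
              refine ⟨ds, t, hds, ht, ?_⟩
              simpa using heq
          · have hst : (M c D T).step (some (⟨x :: v, h⟩, true)) b = ∅ := by
              simp [M, mstep, hbx]
            unfold Acc
            rw [evalFrom_cons_single, hst, evalFrom_empty]
            simp only [Set.mem_empty_iff_false, false_iff]
            rintro ⟨ds, t, hds, ht, heq⟩
            exact hbx (by simpa using congrArg (fun l => l.head?) heq)
      | nil =>
          have hst : (M c D T).step (some (⟨[], h⟩, true)) b
              = {q | ∃ (v : List β) (hv : v ∈ sfxL D T) (ph' : Bool),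
                  q = some (⟨v, hv⟩, ph') ∧ (if ph' then b :: v ∈ D else b :: v ∈ T)} := rfl
          unfold Acc
          rw [evalFrom_cons_single, hst, mem_evalFrom_iff]
          constructor
          · rintro ⟨p, hp, hacc⟩
            rcases hp with ⟨v, hv, ph', rfl, hcond⟩
            cases ph' with
            | true =>
                simp only [if_true] at hcond
                have := (ih v hv).1 hacc
                rcases this with ⟨ds, t, hds, ht, rfl⟩
                refine ⟨(b :: v) :: ds, t, ?_, ht, ?_⟩
                · intro d hd
                  rcases List.mem_cons.1 hd with rfl | hd
                  · exact hcond
                  · exact hds d hd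
                · simp
            | false =>
                simp only [Bool.false_eq_true, if_false] at hcond
                have hwv := (acc_false c D T w v hv).1 hacc
                exact ⟨[], b :: v, by simp, hcond, by simp [hwv]⟩
          · rintro ⟨ds, t, hds, ht, heq⟩
            cases ds with
            | nil =>
                simp only [List.flatten_nil, List.nil_append, List.nil_append] at heq
                subst heq
                have hmem : w ∈ sfxL D T :=
                  tail_mem_sfxL (word_mem_sfxL (List.mem_append_right D ht))
                refine ⟨some (⟨w, hmem⟩, false), ⟨w, hmem, false, rfl, by simpa using ht⟩, ?_⟩
                exact (acc_false c D T w w hmem).2 rfl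
            | cons d ds' =>
                have hdD : d ∈ D := hds _ (List.mem_cons_self)
                obtain ⟨d0, dv, rfl⟩ := List.exists_cons_of_ne_nil (hD _ hdD)
                obtain ⟨rfl, hw⟩ : b = d0 ∧ w = dv ++ (ds'.flatten ++ t) := by
                  simpa using heq
                have hvmem : dv ∈ sfxL D T :=
                  tail_mem_sfxL (word_mem_sfxL (List.mem_append_left T hdD))
                refine ⟨some (⟨dv, hvmem⟩, true), ⟨dv, hvmem, true, rfl, by simpa using hdD⟩, ?_⟩
                exact (ih dv hvmem).2 ⟨ds', t, fun d hd => hds d (List.mem_cons_of_mem _ hd), ht,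
                  by simpa [List.append_assoc] using hw⟩

lemma accepts_M (hD : ∀ d ∈ D, d ≠ []) (hT : ∀ t ∈ T, t ≠ []) (w : List β) :
    w ∈ (M c D T).accepts ↔
      ∃ (ds : List (List β)) (t : List β),
        (∀ d ∈ ds, d ∈ D) ∧ t ∈ T ∧ w = c :: (ds.flatten ++ t) := by
  rw [NFA.mem_accepts]
  simp only [M, Set.mem_singleton_iff, exists_eq_left]
  show (some (⟨[], nil_mem_sfxL D T⟩, false) : St D T) ∈ (M c D T).evalFrom {none} w ↔ _
  cases w with
  | nil =>
      simp only [NFA.evalFrom_nil, Set.mem_singleton_iff]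
      constructor
      · intro h; simp at h
      · rintro ⟨ds, t, -, -, h⟩; cases h
  | cons b w =>
      rw [evalFrom_cons_single]
      by_cases hbc : b = c
      · subst hbc
        have hst : (M b D T).step none b = {some (⟨[], nil_mem_sfxL D T⟩, true)} := by
          simp [M, mstep]
        rw [hst]
        have := acc_true b D T hD hT w [] (nil_mem_sfxL D T)
        unfold Acc at this
        rw [this]
        constructor
        · rintro ⟨ds, t, hds, ht, rfl⟩
          exact ⟨ds, t, hds, ht, by simp⟩
        · rintro ⟨ds, t, hds, ht, heq⟩
          obtain ⟨-, rfl⟩ : b = b ∧ w = ds.flatten ++ t := by simpa using heq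
          exact ⟨ds, t, hds, ht, by simp⟩
      · have hst : (M c D T).step none b = ∅ := by simp [M, mstep, hbc]
        rw [hst, evalFrom_empty]
        simp only [Set.mem_empty_iff_false, false_iff]
        rintro ⟨ds, t, -, -, heq⟩
        exact hbc (by simpa using congrArg (fun l => l.head?) heq)

lemma exists_fin_nfa {σ : Type} [Fintype σ] (A : NFA β σ) :
    ∃ (n : ℕ) (A' : NFA β (Fin n)), A'.accepts = A.accepts := by
  classical
  refine ⟨Fintype.card σ, ?_, ?_⟩
  · exact ⟨fun q b => (Fintype.equivFin σ) '' A.step ((Fintype.equivFin σ).symm q) b,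
      (Fintype.equivFin σ) '' A.start, (Fintype.equivFin σ) '' A.accept⟩
  · set e := Fintype.equivFin σ
    set A' : NFA β (Fin (Fintype.card σ)) :=
      ⟨fun q b => e '' A.step (e.symm q) b, e '' A.start, e '' A.accept⟩ with hA'
    have hstep : ∀ (S : Set σ) (b : β), A'.stepSet (e '' S) b = e '' A.stepSet S b := by
      intro S b
      ext q
      simp only [NFA.stepSet, Set.mem_iUnion, Set.mem_image, hA']
      constructor
      · rintro ⟨p, ⟨⟨s, hs, rfl⟩, ⟨r, hr, rfl⟩⟩⟩
        exact ⟨r, ⟨s, hs, by simpa using hr⟩, rfl⟩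
      · rintro ⟨r, ⟨s, hs, hr⟩, rfl⟩
        exact ⟨e s, ⟨⟨s, hs, rfl⟩, ⟨r, by simpa using hr, rfl⟩⟩⟩
    have heval : ∀ (w : List β) (S : Set σ), A'.evalFrom (e '' S) w = e '' A.evalFrom S w := by
      intro w
      induction w with
      | nil => intro S; rfl
      | cons b w ih =>
          intro S
          show A'.evalFrom (A'.stepSet (e '' S) b) w = _
          rw [hstep, ih]
          rfl
    ext w
    rw [NFA.mem_accepts, NFA.mem_accepts]
    show (∃ q ∈ A'.accept, q ∈ A'.evalFrom (e '' A.start) w) ↔ _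
    rw [heval]
    constructor
    · rintro ⟨q, ⟨p, hp, rfl⟩, r, hr, he⟩
      have : p = r := e.injective he.symm
      exact ⟨r, this ▸ hp, hr⟩
    · rintro ⟨q, hq, hr⟩
      exact ⟨e q, ⟨q, hq, rfl⟩, ⟨q, hr, rfl⟩⟩



instance {α : Type} [DecidableEq α] : ∀ (A X : Option (Finset α)), Decidable (compat A X)
  | none, none => isTrue trivial
  | none, some _ => isFalse (fun h => h)
  | some _, none => isFalse (fun h => h)
  | some A, some Y => inferInstanceAs (Decidable (∀ a ∈ Y, a ∉ A))

variable {α : Type} [Fintype α] [LinearOrder α]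

def cL : Xi α ⊕ Theta α := Sum.inl (Sum.inr (Sum.inr MSym.lang))

def dword (p : Option (Finset α) × α) : List (Xi α ⊕ Theta α) :=
  (encAnnXi p.1).map Sum.inl ++
    [Sum.inl (Sum.inr (Sum.inr MSym.comma)), Sum.inl (Sum.inl p.2),
     Sum.inr (Sum.inl p.2), Sum.inl (Sum.inr (Sum.inr MSym.comma))]

def tword (p : Option (Finset α) × Option (Finset α)) : List (Xi α ⊕ Theta α) :=
  (encAnnXi p.1).map Sum.inl ++ (encRef p.2).map Sum.inr ++
    [Sum.inl (Sum.inr (Sum.inr MSym.rang))]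

noncomputable def DL : List (List (Xi α ⊕ Theta α)) :=
  (Finset.univ : Finset (Option (Finset α) × α)).toList.map dword

noncomputable def TL : List (List (Xi α ⊕ Theta α)) :=
  (((Finset.univ : Finset (Option (Finset α) × Option (Finset α))).filter
    (fun p => compat p.1 p.2)).toList).map tword

lemma mem_DL {d : List (Xi α ⊕ Theta α)} : d ∈ (DL (α := α)) ↔ ∃ p, d = dword p := by
  simp [DL, eq_comm]

lemma mem_TL {t : List (Xi α ⊕ Theta α)} :
    t ∈ (TL (α := α)) ↔ ∃ p, compat p.1 p.2 ∧ t = tword p := by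
  simp [TL, eq_comm, and_comm]

lemma DL_ne (d : List (Xi α ⊕ Theta α)) (hd : d ∈ (DL (α := α))) : d ≠ [] := by
  rcases mem_DL.1 hd with ⟨p, rfl⟩
  simp [dword]

lemma TL_ne (t : List (Xi α ⊕ Theta α)) (ht : t ∈ (TL (α := α))) : t ≠ [] := by
  rcases mem_TL.1 ht with ⟨p, -, rfl⟩
  simp [tword]

/-- rebuild an observation from the block list and the final annotation -/
def mk : List (Option (Finset α) × α) → Option (Finset α) → FLObs α
  | [], A => (A, [])
  | (B, a) :: l, A => (B, (a, (mk l A).1) :: (mk l A).2)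

def toLaux : Option (Finset α) → List (α × Option (Finset α)) → List (Option (Finset α) × α)
  | _, [] => []
  | A, (a, B) :: r => (A, a) :: toLaux B r

lemma lastAnn_cons (C B : Option (Finset α)) (a : α) (r : List (α × Option (Finset α))) :
    lastAnn (C, (a, B) :: r) = lastAnn (B, r) := by
  cases r with
  | nil => rfl
  | cons q r =>
      cases h : (q :: r).getLast? with
      | none => simp [List.getLast?_eq_none_iff] at h
      | some p => simp [lastAnn, List.getLast?_cons_cons, h]

lemma lastAnn_mk : ∀ (l : List (Option (Finset α) × α)) (A : Option (Finset α)),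
    lastAnn (mk l A) = A := by
  intro l
  induction l with
  | nil => intro A; rfl
  | cons p l ih =>
      intro A
      obtain ⟨B, a⟩ := p
      show lastAnn (B, (a, (mk l A).1) :: (mk l A).2) = A
      rw [lastAnn_cons]
      exact ih A

lemma mk_toLaux : ∀ (r : List (α × Option (Finset α))) (A : Option (Finset α)),
    mk (toLaux A r) (lastAnn (A, r)) = (A, r) := by
  intro r
  induction r with
  | nil => intro A; rfl
  | cons q r ih =>
      intro A
      obtain ⟨a, B⟩ := q
      show mk ((A, a) :: toLaux B r) (lastAnn (A, (a, B) :: r)) = _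
      rw [lastAnn_cons]
      show (A, (a, (mk (toLaux B r) (lastAnn (B, r))).1) :: (mk (toLaux B r) (lastAnn (B, r))).2) = _
      rw [ih B]

def wd (l : List (Option (Finset α) × α)) (A X : Option (Finset α)) :
    List (Xi α ⊕ Theta α) :=
  (l.map dword).flatten ++ tword (A, X)

lemma lp_inl (l : List (Xi α)) :
    (l.map (Sum.inl : Xi α → Xi α ⊕ Theta α)).filterMap Sum.getLeft? = l := by
  induction l with
  | nil => rfl
  | cons a l ih => simp [ih]

lemma lp_inr (l : List (Theta α)) :
    (l.map (Sum.inr : Theta α → Xi α ⊕ Theta α)).filterMap Sum.getLeft? = [] := by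
  induction l with
  | nil => rfl
  | cons a l ih => simp [ih]

lemma rp_inl (l : List (Xi α)) :
    (l.map (Sum.inl : Xi α → Xi α ⊕ Theta α)).filterMap Sum.getRight? = [] := by
  induction l with
  | nil => rfl
  | cons a l ih => simp [ih]

lemma rp_inr (l : List (Theta α)) :
    (l.map (Sum.inr : Theta α → Xi α ⊕ Theta α)).filterMap Sum.getRight? = l := by
  induction l with
  | nil => rfl
  | cons a l ih => simp [ih]

lemma proj_left_aux : ∀ (l : List (Option (Finset α) × α)) (A X : Option (Finset α)),
    (wd l A X).filterMap Sum.getLeft? =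
      encAnnXi (mk l A).1 ++
        ((mk l A).2.map (fun p => [Sum.inr (Sum.inr MSym.comma), Sum.inl p.1,
          Sum.inr (Sum.inr MSym.comma)] ++ encAnnXi p.2)).flatten ++
        [Sum.inr (Sum.inr MSym.rang)] := by
  intro l
  induction l with
  | nil =>
      intro A X
      show ((tword (A, X)).filterMap Sum.getLeft?) = _
      rw [tword, List.filterMap_append, List.filterMap_append, lp_inl, lp_inr]
      simp [mk]
  | cons p l ih =>
      intro A X
      obtain ⟨B, a⟩ := p
      have hwd : wd ((B, a) :: l) A X = dword (B, a) ++ wd l A X := by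
        simp [wd]
      rw [hwd, List.filterMap_append, ih, dword, List.filterMap_append, lp_inl]
      simp [mk, List.filterMap_cons]

lemma proj_right_aux : ∀ (l : List (Option (Finset α) × α)) (A X : Option (Finset α)),
    (wd l A X).filterMap Sum.getRight? =
      ((mk l A).2.map Prod.fst).map Sum.inl ++ encRef X := by
  intro l
  induction l with
  | nil =>
      intro A X
      show ((tword (A, X)).filterMap Sum.getRight?) = _
      rw [tword, List.filterMap_append, List.filterMap_append, rp_inl, rp_inr]
      simp [mk]
  | cons p l ih =>
      intro A X
      obtain ⟨B, a⟩ := p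
      have hwd : wd ((B, a) :: l) A X = dword (B, a) ++ wd l A X := by
        simp [wd]
      rw [hwd, List.filterMap_append, ih, dword, List.filterMap_append, rp_inl]
      simp [mk, List.filterMap_cons]

lemma proj_left (l : List (Option (Finset α) × α)) (A X : Option (Finset α)) :
    ((cL :: wd l A X).filterMap Sum.getLeft?) = phi (mk l A) := by
  show (Sum.inr (Sum.inr MSym.lang) : Xi α) :: (wd l A X).filterMap Sum.getLeft? = _
  rw [proj_left_aux]
  simp [phi]

lemma proj_right (l : List (Option (Finset α) × α)) (A X : Option (Finset α)) :
    ((cL :: wd l A X).filterMap Sum.getRight?) = psiF ((mk l A).2.map Prod.fst, X) := by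
  show (wd l A X).filterMap Sum.getRight? = _
  rw [proj_right_aux]
  rfl

lemma exists_blocks : ∀ (ds : List (List (Xi α ⊕ Theta α))),
    (∀ d ∈ ds, d ∈ (DL (α := α))) →
    ∃ l : List (Option (Finset α) × α), ds = l.map dword := by
  intro ds
  induction ds with
  | nil => exact fun _ => ⟨[], rfl⟩
  | cons d ds ih =>
      intro h
      rcases mem_DL.1 (h d (List.mem_cons_self)) with ⟨p, rfl⟩
      rcases ih (fun d hd => h d (List.mem_cons_of_mem _ hd)) with ⟨l, rfl⟩
      exact ⟨p :: l, rfl⟩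


-- ===== part (b) =====

lemma prefix_split : ∀ (s₁ s₂ : List α) (r₁ r₂ : List (Theta α)),
    (r₁ = [] ∨ ∃ c r, r₁ = Sum.inr c :: r) →
    (r₂ = [] ∨ ∃ c r, r₂ = Sum.inr c :: r) →
    (s₁.map Sum.inl ++ r₁ <+: s₂.map Sum.inl ++ r₂) →
    (s₁ <+: s₂ ∧ r₁ = []) ∨ (s₁ = s₂ ∧ r₁ <+: r₂) := by
  intro s₁
  induction s₁ with
  | nil =>
      intro s₂ r₁ r₂ h₁ h₂ h
      rcases h₁ with rfl | ⟨c, r, rfl⟩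
      · exact Or.inl ⟨List.nil_prefix, rfl⟩
      · cases s₂ with
        | nil => exact Or.inr ⟨rfl, by simpa using h⟩
        | cons b s₂ =>
            exfalso
            simp at h
  | cons a s₁ ih =>
      intro s₂ r₁ r₂ h₁ h₂ h
      cases s₂ with
      | nil =>
          exfalso
          rcases h₂ with rfl | ⟨c, r, rfl⟩
          · simp at h
          · simp at h
      | cons b s₂ =>
          have h' : a = b ∧ (s₁.map Sum.inl ++ r₁ <+: s₂.map Sum.inl ++ r₂) := by
            simpa using h
          obtain ⟨rfl, h''⟩ := h'
          rcases ih s₂ r₁ r₂ h₁ h₂ h'' with ⟨hp, hr⟩ | ⟨he, hr⟩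
          · exact Or.inl ⟨List.cons_prefix_cons.2 ⟨rfl, hp⟩, hr⟩
          · exact Or.inr ⟨by rw [he], hr⟩

lemma map_append_sentinel {γ : Type} (f : α → γ) (z : γ)
    (hf : Function.Injective f) (hz : ∀ a, f a ≠ z) :
    ∀ (l₁ l₂ : List α), (l₁.map f ++ [z] <+: l₂.map f ++ [z]) → l₁ = l₂ := by
  intro l₁
  induction l₁ with
  | nil =>
      intro l₂ h
      cases l₂ with
      | nil => rfl
      | cons b l₂ =>
          exfalso
          have hzb : z = f b := by simpa using h
          exact hz b hzb.symm
  | cons a l₁ ih =>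
      intro l₂ h
      cases l₂ with
      | nil =>
          exfalso
          rcases h with ⟨u, hu⟩
          have : f a = z := by simpa using congrArg List.head? hu
          exact hz a this
      | cons b l₂ =>
          have h' : f a = f b ∧ (l₁.map f ++ [z] <+: l₂.map f ++ [z]) := by
            simpa using h
          have hab : a = b := hf h'.1
          subst hab
          rw [ih l₂ h'.2]

lemma encRef_some_prefix {X₁ X₂ : Finset α}
    (h : (encRef (some X₁) : List (Theta α)) <+: encRef (some X₂)) : X₁ = X₂ := by
  have h' : (X₁.sort (· ≤ ·)).map (fun a => (Sum.inr (Sum.inl a) : Theta α)) ++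
      [Sum.inr (Sum.inr MSym.rang)] <+:
      (X₂.sort (· ≤ ·)).map (fun a => (Sum.inr (Sum.inl a) : Theta α)) ++
      [Sum.inr (Sum.inr MSym.rang)] := by
    simpa [encRef] using h
  have hsort : X₁.sort (· ≤ ·) = X₂.sort (· ≤ ·) := by
    refine map_append_sentinel _ _ ?_ ?_ _ _ h'
    · intro a b hab; simpa using hab
    · intro a hc; simp at hc
  ext a
  rw [← Finset.mem_sort (α := α) (· ≤ ·), hsort, Finset.mem_sort]

lemma extLE_refl (u : FLObs α) : extLE u u :=
  ⟨Or.inl rfl, le_refl _, fun i hi hj => ⟨rfl, Or.inl rfl⟩⟩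

lemma encRef_shape (X : Option (Finset α)) :
    (encRef X : List (Theta α)) = [] ∨ ∃ c r, encRef X = Sum.inr c :: r := by
  cases X with
  | none => exact Or.inl rfl
  | some X =>
      exact Or.inr ⟨Sum.inr MSym.lang,
        (X.sort (· ≤ ·)).map (fun a => Sum.inr (Sum.inl a)) ++ [Sum.inr (Sum.inr MSym.rang)],
        by simp [encRef]⟩

/-- the truncation used in part (b) -/
lemma truncation (s₁ : List α) (X₂ : Option (Finset α)) (b : FLObs α)
    (hb : failRel b (s₁ ++ (b.2.map Prod.fst).drop s₁.length, X₂))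
    (hpre : s₁ <+: b.2.map Prod.fst) :
    ∃ a, failRel a (s₁, none) ∧ extLE a b := by
  classical
  refine ⟨(none, (b.2.take s₁.length).map (fun p => (p.1, none))), ⟨?_, ?_⟩, ?_, ?_, ?_⟩
  · show s₁ = ((b.2.take s₁.length).map (fun p => (p.1, none))).map Prod.fst
    rw [List.map_map]
    have : ((b.2.take s₁.length).map (Prod.fst ∘ fun p => ((p.1 : α), (none : Option (Finset α))))) =
        (b.2.map Prod.fst).take s₁.length := by
      rw [← List.map_take]
      rfl
    rw [this]
    exact (List.prefix_iff_eq_take.1 hpre)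
  · show compat (lastAnn ((none : Option (Finset α)), (b.2.take s₁.length).map (fun p => (p.1, none)))) none
    have : lastAnn ((none : Option (Finset α)), (b.2.take s₁.length).map (fun p => (p.1, none))) = none := by
      unfold lastAnn
      cases h : ((b.2.take s₁.length).map (fun p => ((p.1 : α), (none : Option (Finset α))))).getLast? with
      | none => rfl
      | some p =>
          rw [List.getLast?_map] at h
          cases h' : (b.2.take s₁.length).getLast? with
          | none => rw [h'] at h; cases h
          | some q => rw [h'] at h; simp only [Option.map_some, Option.some.injEq] at h; rw [← h]
    rw [this]
    trivial
  · exact Or.inr rfl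
  · simpa using List.length_take_le _ _
  · intro i hi hj
    constructor
    · show (((b.2.take s₁.length).map (fun p => ((p.1 : α), (none : Option (Finset α))))).get _).1 = _
      simp [List.getElem_take]
    · show optExt (((b.2.take s₁.length).map (fun p => ((p.1 : α), (none : Option (Finset α))))).get _).2 _
      refine Or.inr ?_
      simp

theorem part_b (y₁ y₂ : List α × Option (Finset α)) (hp : psiF y₁ <+: psiF y₂) :
    inducedRel extLE failRel y₁ y₂ := by
  obtain ⟨s₁, X₁⟩ := y₁
  obtain ⟨s₂, X₂⟩ := y₂
  have hsplit := prefix_split s₁ s₂ (encRef X₁) (encRef X₂)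
    (encRef_shape X₁) (encRef_shape X₂) hp
  cases X₁ with
  | none =>
      have hpre : s₁ <+: s₂ := by
        rcases hsplit with ⟨h, -⟩ | ⟨h, -⟩
        · exact h
        · exact h ▸ List.prefix_rfl
      intro b hb
      have hs₂ : s₂ = b.2.map Prod.fst := hb.1
      have hpre' : s₁ <+: b.2.map Prod.fst := hs₂ ▸ hpre
      have hb' : failRel b (s₁ ++ (b.2.map Prod.fst).drop s₁.length, X₂) := by
        refine ⟨?_, hb.2⟩
        show s₁ ++ (b.2.map Prod.fst).drop s₁.length = b.2.map Prod.fst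
        have := List.prefix_iff_eq_take.1 hpre'
        conv_rhs => rw [← List.take_append_drop s₁.length (b.2.map Prod.fst)]
        rw [← this]
      exact truncation s₁ X₂ b hb' hpre'
  | some X₁ =>
      rcases hsplit with ⟨-, h⟩ | ⟨he, hr⟩
      · exact absurd h (by simp [encRef])
      · cases X₂ with
        | none =>
            exfalso
            simp [encRef] at hr
        | some X₂ =>
            have hX : X₁ = X₂ := encRef_some_prefix hr
            subst hX
            subst he
            intro b hb
            exact ⟨b, hb, extLE_refl b⟩


theorem main {α : Type} [Fintype α] [Nonempty α] [LinearOrder α] :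
    (∃ (n : ℕ) (A : NFA (Xi α ⊕ Theta α) (Fin n)),
      Recognises A (fun s t => ∃ (x : FLObs α) (y : List α × Option (Finset α)),
        s = phi x ∧ t = psiF y ∧ failRel x y)) ∧
    (∀ y₁ y₂ : List α × Option (Finset α),
      psiF y₁ <+: psiF y₂ → inducedRel extLE failRel y₁ y₂) := by
  constructor
  · obtain ⟨n, A, hA⟩ := exists_fin_nfa (M (cL (α := α)) DL TL)
    refine ⟨n, A, ?_⟩
    intro s t
    constructor
    · rintro ⟨x, y, rfl, rfl, hf⟩
      have hmk : mk (toLaux x.1 x.2) (lastAnn x) = x := mk_toLaux x.2 x.1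
      refine ⟨cL :: wd (toLaux x.1 x.2) (lastAnn x) y.2, ?_, ?_, ?_⟩
      · rw [hA, accepts_M cL DL TL DL_ne TL_ne]
        refine ⟨(toLaux x.1 x.2).map dword, tword (lastAnn x, y.2), ?_, ?_, rfl⟩
        · intro d hd
          rcases List.mem_map.1 hd with ⟨p, -, rfl⟩
          exact mem_DL.2 ⟨p, rfl⟩
        · exact mem_TL.2 ⟨(lastAnn x, y.2), hf.2, rfl⟩
      · rw [proj_left, hmk]
      · rw [proj_right, hmk, ← hf.1]
    · rintro ⟨w, hw, hs, ht⟩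
      rw [hA, accepts_M cL DL TL DL_ne TL_ne] at hw
      obtain ⟨ds, tw, hds, htw, rfl⟩ := hw
      obtain ⟨l, rfl⟩ := exists_blocks ds hds
      obtain ⟨p, hc, rfl⟩ := mem_TL.1 htw
      refine ⟨mk l p.1, ((mk l p.1).2.map Prod.fst, p.2), ?_, ?_, rfl, ?_⟩
      · rw [← hs]
        exact proj_left l p.1 p.2
      · rw [← ht]
        exact proj_right l p.1 p.2
      · show compat (lastAnn (mk l p.1)) p.2
        rw [lastAnn_mk]
        exact hc
  · exact part_b

end Stmt8

/-- The stable failures model `F` is rational ... -/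
theorem stmt8 {α : Type} [Fintype α] [Nonempty α] [LinearOrder α] :
    (∃ (n : ℕ) (A : NFA (Xi α ⊕ Theta α) (Fin n)),
      Recognises A (fun s t => ∃ (x : FLObs α) (y : List α × Option (Finset α)),
        s = phi x ∧ t = psiF y ∧ failRel x y)) ∧
    (∀ y₁ y₂ : List α × Option (Finset α),
      psiF y₁ <+: psiF y₂ → inducedRel extLE failRel y₁ y₂) := by
  exact Stmt8.main
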